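/- Suppose X₁,…,X_d are Hermitian n×n complex matrices, S is a unitary n×n matrix such that SX_j = X_jS for j = 1,…,d−1 and SX_d = −X_dS, Γ₁,…,Γ_d is a Clifford representation (Hermitian m×m matrices with Γ_j² = I and Γ_jΓ_k = −Γ_kΓ_j for j ≠ k), and R is a unitary m×m matrix such that RΓ_j = Γ_jR for j = 1,…,d−1 and RΓ_d = −Γ_dR. Then for every λ ∈ ℝ^d, with γ = (λ₁,…,λ_{d−1},−λ_d), the localizers satisfy (S⊗R) L_λ(X₁,…,X_d) (S⊗R)† = L_γ(X₁,…,X_d); in particular μ^C_λ(X₁,…,X_d) = μ^C_γ(X₁,…,X_d). -/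

import Mathlib

open Kronecker Matrix



/-- The smallest singular value of a matrix: the infimum over unit vectors `v`
of `‖Av‖` (ℓ² norms). -/
noncomputable def sigmaMin {m p : Type*} [Fintype m] [Fintype p] [DecidableEq p]
    (A : Matrix m p ℂ) : ℝ :=
  ⨅ v : {v : EuclideanSpace ℂ p // ‖v‖ = 1}, ‖(Matrix.toEuclideanLin A) v.1‖

/-- The spectral localizer `L_λ(X₁,…,X_d) = Σ_j (X_j − λ_j I) ⊗ Γ_j`. -/
noncomputable def localizer {n m d : ℕ} (X : Fin d → Matrix (Fin n) (Fin n) ℂ)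
    (Γ : Fin d → Matrix (Fin m) (Fin m) ℂ) (lam : Fin d → ℝ) :
    Matrix (Fin n × Fin m) (Fin n × Fin m) ℂ :=
  ∑ j, (X j - (lam j : ℂ) • 1) ⊗ₖ Γ j

/-- if the unitary `S` commutes with `X₁,…,X_{d−1}` and anticommutes
with `X_d`, and the unitary `R` commutes with `Γ₁,…,Γ_{d−1}` and anticommutes with
`Γ_d`, then `(S⊗R) L_λ (S⊗R)† = L_γ` with `γ = (λ₁,…,λ_{d−1},−λ_d)`; in particular
the localizer gaps at `λ` and `γ` agree. -/

lemma kron_conjTranspose {n m : ℕ} (A : Matrix (Fin n) (Fin n) ℂ) (B : Matrix (Fin m) (Fin m) ℂ) :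
    (A ⊗ₖ B)ᴴ = Aᴴ ⊗ₖ Bᴴ := by
  ext ⟨i, j⟩ ⟨k, l⟩
  simp [conjTranspose_apply, Matrix.kroneckerMap_apply]

lemma toEuclideanLin_mul {p : Type*} [Fintype p] [DecidableEq p]
    (A B : Matrix p p ℂ) (v : EuclideanSpace ℂ p) :
    Matrix.toEuclideanLin (A * B) v = Matrix.toEuclideanLin A (Matrix.toEuclideanLin B v) := by
  simp [Matrix.toEuclideanLin_apply, Matrix.mulVec_mulVec]

lemma norm_toEuclideanLin_unitary {p : Type*} [Fintype p] [DecidableEq p]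
    {U : Matrix p p ℂ} (hU : Uᴴ * U = 1) (v : EuclideanSpace ℂ p) :
    ‖Matrix.toEuclideanLin U v‖ = ‖v‖ := by
  have h : inner ℂ (Matrix.toEuclideanLin U v) (Matrix.toEuclideanLin U v) = inner ℂ v v := by
    rw [← LinearMap.adjoint_inner_right, ← Matrix.toEuclideanLin_conjTranspose_eq_adjoint,
      ← toEuclideanLin_mul, hU]
    simp [Matrix.toEuclideanLin_apply]
  rw [@norm_eq_sqrt_re_inner ℂ, @norm_eq_sqrt_re_inner ℂ, h]

theorem localizer_symmetry {n m d : ℕ}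
    (X : Fin (d + 1) → Matrix (Fin n) (Fin n) ℂ) (hX : ∀ j, (X j).IsHermitian)
    (Γ : Fin (d + 1) → Matrix (Fin m) (Fin m) ℂ) (hΓherm : ∀ j, (Γ j).IsHermitian)
    (hΓsq : ∀ j, Γ j * Γ j = 1)
    (hΓanti : ∀ j k, j ≠ k → Γ j * Γ k = -(Γ k * Γ j))
    (S : Matrix (Fin n) (Fin n) ℂ) (hS : S ∈ Matrix.unitaryGroup (Fin n) ℂ)
    (hScomm : ∀ j : Fin d, S * X j.castSucc = X j.castSucc * S)
    (hSanti : S * X (Fin.last d) = -(X (Fin.last d) * S))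
    (R : Matrix (Fin m) (Fin m) ℂ) (hR : R ∈ Matrix.unitaryGroup (Fin m) ℂ)
    (hRcomm : ∀ j : Fin d, R * Γ j.castSucc = Γ j.castSucc * R)
    (hRanti : R * Γ (Fin.last d) = -(Γ (Fin.last d) * R))
    (lam : Fin (d + 1) → ℝ) :
    (S ⊗ₖ R) * localizer X Γ lam * (S ⊗ₖ R)ᴴ =
        localizer X Γ (Function.update lam (Fin.last d) (-(lam (Fin.last d)))) ∧
      sigmaMin (localizer X Γ lam) =
        sigmaMin (localizer X Γ (Function.update lam (Fin.last d) (-(lam (Fin.last d))))) := by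
  have hSS : S * Sᴴ = 1 := by
    have := (Matrix.mem_unitaryGroup_iff).mp hS; rwa [Matrix.star_eq_conjTranspose] at this
  have hRR : R * Rᴴ = 1 := by
    have := (Matrix.mem_unitaryGroup_iff).mp hR; rwa [Matrix.star_eq_conjTranspose] at this
  have hSS' : Sᴴ * S = 1 := by
    have := (Matrix.mem_unitaryGroup_iff').mp hS; rwa [Matrix.star_eq_conjTranspose] at this
  have hRR' : Rᴴ * R = 1 := by
    have := (Matrix.mem_unitaryGroup_iff').mp hR; rwa [Matrix.star_eq_conjTranspose] at this
  have hconj : (S ⊗ₖ R) * localizer X Γ lam * (S ⊗ₖ R)ᴴ =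
      localizer X Γ (Function.update lam (Fin.last d) (-(lam (Fin.last d)))) := by
    rw [kron_conjTranspose]
    unfold localizer
    rw [Finset.mul_sum, Finset.sum_mul]
    rw [Fin.sum_univ_castSucc, Fin.sum_univ_castSucc (f := fun j =>
      (X j - ((Function.update lam (Fin.last d) (-(lam (Fin.last d)))) j : ℂ) • 1) ⊗ₖ Γ j)]
    congr 1
    · apply Finset.sum_congr rfl
      intro j _
      rw [← Matrix.mul_kronecker_mul, ← Matrix.mul_kronecker_mul]
      have h1 : S * (X j.castSucc - (lam j.castSucc : ℂ) • 1) * Sᴴ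
          = X j.castSucc - (lam j.castSucc : ℂ) • 1 := by
        rw [mul_sub, hScomm j, Matrix.mul_smul, mul_one, sub_mul, smul_mul_assoc,
          mul_assoc, hSS, mul_one]
      have h2 : R * Γ j.castSucc * Rᴴ = Γ j.castSucc := by
        rw [hRcomm j, mul_assoc, hRR, mul_one]
      rw [h1, h2, Function.update_of_ne (Fin.castSucc_lt_last j).ne]
    · rw [← Matrix.mul_kronecker_mul, ← Matrix.mul_kronecker_mul]
      have h1 : S * (X (Fin.last d) - (lam (Fin.last d) : ℂ) • 1) * Sᴴ
          = -(X (Fin.last d) + (lam (Fin.last d) : ℂ) • 1) := by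
        rw [mul_sub, hSanti, Matrix.mul_smul, mul_one]
        rw [show -(X (Fin.last d) * S) - (lam (Fin.last d) : ℂ) • S
            = (-(X (Fin.last d) + (lam (Fin.last d) : ℂ) • 1)) * S by
          rw [neg_mul, add_mul, smul_mul_assoc, one_mul, neg_add, sub_eq_add_neg]]
        rw [mul_assoc, hSS, mul_one]
      have h2 : R * Γ (Fin.last d) * Rᴴ = -Γ (Fin.last d) := by
        rw [hRanti, neg_mul, mul_assoc, hRR, mul_one]
      rw [h1, h2, Function.update_self]
      rw [show (-(X (Fin.last d) + (lam (Fin.last d) : ℂ) • 1)) ⊗ₖ (-Γ (Fin.last d))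
          = (X (Fin.last d) + (lam (Fin.last d) : ℂ) • 1) ⊗ₖ Γ (Fin.last d) by
        ext ⟨i, j⟩ ⟨k, l⟩; simp [Matrix.kroneckerMap_apply]; ring]
      push_cast
      rw [neg_smul, sub_neg_eq_add]
  refine ⟨hconj, ?_⟩
  -- sigmaMin invariance
  set U := S ⊗ₖ R with hU
  have hUU : Uᴴ * U = 1 := by
    rw [hU, kron_conjTranspose, ← Matrix.mul_kronecker_mul, hSS', hRR',
      Matrix.one_kronecker_one]
  have hUU' : U * Uᴴ = 1 := by
    rw [hU, kron_conjTranspose, ← Matrix.mul_kronecker_mul, hSS, hRR,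
      Matrix.one_kronecker_one]
  rw [← hconj]
  unfold sigmaMin
  -- bijection of the unit sphere given by v ↦ Uᴴ v
  have hnormUH : ∀ v : EuclideanSpace ℂ (Fin n × Fin m),
      ‖Matrix.toEuclideanLin Uᴴ v‖ = ‖v‖ := by
    intro v
    exact norm_toEuclideanLin_unitary (by rwa [Matrix.conjTranspose_conjTranspose]) v
  have hnormU : ∀ v : EuclideanSpace ℂ (Fin n × Fin m),
      ‖Matrix.toEuclideanLin U v‖ = ‖v‖ := fun v => norm_toEuclideanLin_unitary hUU v
  let e : {v : EuclideanSpace ℂ (Fin n × Fin m) // ‖v‖ = 1} ≃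
      {v : EuclideanSpace ℂ (Fin n × Fin m) // ‖v‖ = 1} :=
    { toFun := fun v => ⟨Matrix.toEuclideanLin Uᴴ v.1, by rw [hnormUH]; exact v.2⟩
      invFun := fun v => ⟨Matrix.toEuclideanLin U v.1, by rw [hnormU]; exact v.2⟩
      left_inv := fun v => by
        ext1
        simp only
        rw [← toEuclideanLin_mul, hUU']
        simp [Matrix.toEuclideanLin_apply]
      right_inv := fun v => by
        ext1
        simp only
        rw [← toEuclideanLin_mul, hUU]
        simp [Matrix.toEuclideanLin_apply] }
  have hinv : ∀ v : EuclideanSpace ℂ (Fin n × Fin m),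
      (Matrix.toEuclideanLin Uᴴ) ((Matrix.toEuclideanLin U) v) = v := by
    intro v; rw [← toEuclideanLin_mul, hUU]; simp [Matrix.toEuclideanLin_apply]
  exact Equiv.iInf_congr e.symm (fun v => by
    show ‖Matrix.toEuclideanLin (U * localizer X Γ lam * Uᴴ)
        (Matrix.toEuclideanLin U v.1)‖ = _
    rw [toEuclideanLin_mul, toEuclideanLin_mul, hinv, hnormU])
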